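/- Let k be a field, n ≥ 1, and let R be a commutative k-algebra. Set A_n := k[t]/(t^{n+1}), A_{n-1} := k[t]/(t^n), B_n := k[t,ε]/(t^{n+1}, ε²), B_{n-1} := k[t,ε]/(t^n, ε²) and C_n := k[t,ε]/(t^{n+1}, ε², εt^n). Suppose that for every k-algebra homomorphism ξ : R → A_n, writing ξ' : R → A_{n-1} for its composition with the reduction A_n → A_{n-1}, the map { φ ∈ Hom_{k-alg}(R, B_n) : π_n ∘ φ = ξ } → { ψ ∈ Hom_{k-alg}(R, B_{n-1}) : π_{n-1} ∘ ψ = ξ' } given by composing with the reduction B_n → B_{n-1} (t^n ↦ 0) is surjective, where π_n : B_n → A_n and π_{n-1} : B_{n-1} → A_{n-1} are the maps setting ε = 0. Then the map Hom_{k-alg}(R, B_n) → Hom_{k-alg}(R, C_n) given by composing with the canonical surjection B_n → C_n is surjective. -/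
import Mathlib


open Polynomial

/-- `k[t,ε]`, realized as `(k[t])[ε]` with `t` the inner and `ε` the outer variable. -/
noncomputable abbrev kTE (k : Type*) [Field k] : Type _ := Polynomial (Polynomial k)

/-- The variable `t` in `k[t,ε]`. -/
noncomputable abbrev tP (k : Type*) [Field k] : kTE k := Polynomial.C Polynomial.X

/-- The variable `ε` in `k[t,ε]`. -/
noncomputable abbrev eP (k : Type*) [Field k] : kTE k := Polynomial.X

/-- Evaluation at `ε = 0`, as a `k`-algebra hom `k[t,ε] → k[t]`. -/
noncomputable def ev0 (k : Type*) [Field k] : kTE k →ₐ[k] Polynomial k :=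
  { Polynomial.evalRingHom (0 : Polynomial k) with
    commutes' := fun a => by
      simp [Polynomial.algebraMap_apply] }

lemma ev0_apply (k : Type*) [Field k] (x : kTE k) : ev0 k x = Polynomial.eval 0 x := rfl

/-- Key ideal-membership lemma: an element of `k[t,ε]` lying in `(tⁿ, ε²)` whose
`ε = 0` specialization lies in `(t^{n+1})` lies in `(t^{n+1}, ε², εtⁿ)`. -/
lemma key_mem (k : Type*) [Field k] (n : ℕ) (x : kTE k)
    (h1 : Polynomial.eval 0 x ∈ Ideal.span {(X : Polynomial k) ^ (n + 1)})
    (h2 : x ∈ Ideal.span {tP k ^ n, eP k ^ 2}) :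
    x ∈ Ideal.span ({tP k ^ (n + 1), eP k ^ 2, eP k * tP k ^ n} : Set (kTE k)) := by
  set S : Ideal (kTE k) := Ideal.span ({tP k ^ (n + 1), eP k ^ 2, eP k * tP k ^ n} : Set (kTE k))
  have g1 : tP k ^ (n + 1) ∈ S := Ideal.subset_span (by simp)
  have g2 : eP k ^ 2 ∈ S := Ideal.subset_span (by simp)
  have g3 : eP k * tP k ^ n ∈ S := Ideal.subset_span (by simp)
  -- coefficient 0 of x (in ε) is eval 0 x, lies in (X^{n+1})
  obtain ⟨u, hu⟩ := Ideal.mem_span_singleton.mp h1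
  have hc0 : x.coeff 0 = (X : Polynomial k) ^ (n + 1) * u := by
    rw [Polynomial.coeff_zero_eq_eval_zero]; exact hu
  -- coefficient 1 of x is a multiple of X^n
  obtain ⟨a, b, hab⟩ := Ideal.mem_span_pair.mp h2
  have htPn : tP k ^ n = Polynomial.C ((X : Polynomial k) ^ n) := by
    simp [tP, map_pow]
  have hc1 : x.coeff 1 = a.coeff 1 * (X : Polynomial k) ^ n := by
    rw [← hab]
    rw [htPn]
    rw [Polynomial.coeff_add, Polynomial.coeff_mul_C, Polynomial.coeff_mul_X_pow']
    simp
  -- decompose x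
  have hdecomp : x = x.divX.divX * X ^ 2 + Polynomial.C (x.coeff 1) * X
      + Polynomial.C (x.coeff 0) := by
    conv_lhs => rw [← Polynomial.divX_mul_X_add x]
    conv_lhs => rw [← Polynomial.divX_mul_X_add x.divX]
    rw [Polynomial.coeff_divX]
    ring
  rw [hdecomp]
  refine Ideal.add_mem _ (Ideal.add_mem _ ?_ ?_) ?_
  · -- x.divX.divX * X ^ 2 ∈ S
    exact Ideal.mul_mem_left _ _ g2
  · -- C (x.coeff 1) * X ∈ S
    have : Polynomial.C (x.coeff 1) * (X : kTE k)
        = (eP k * tP k ^ n) * Polynomial.C (a.coeff 1) := by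
      rw [hc1, map_mul, htPn]
      ring
    rw [this]
    exact Ideal.mul_mem_right _ _ g3
  · -- C (x.coeff 0) ∈ S
    have : Polynomial.C (x.coeff 0) = tP k ^ (n + 1) * Polynomial.C u := by
      rw [hc0, map_mul, map_pow]
    rw [this]
    exact Ideal.mul_mem_right _ _ g1

/-- Second step of the T¹-lifting principle, for the deformation functor
`D = Hom_{k-alg}(R, ·)`: if for all `ξ : R → A_n` the induced map between the fibers
`D(B_n)_ξ → D(B_{n-1})_{ξ'}` is surjective, then `D(B_n) → D(C_n)` is surjective. -/
theorem hom_to_Bn_surjects_onto_hom_to_Cn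
    (k : Type*) [Field k] (n : ℕ) (hn : 1 ≤ n)
    (R : Type*) [CommRing R] [Algebra k R]
    -- `π_n : B_n → A_n`, setting `ε = 0`
    (πn : (kTE k ⧸ Ideal.span {tP k ^ (n + 1), eP k ^ 2}) →ₐ[k]
        Polynomial k ⧸ Ideal.span {(X : Polynomial k) ^ (n + 1)})
    (hπn : ∀ x : kTE k,
      πn (Ideal.Quotient.mk _ x) = Ideal.Quotient.mk _ (Polynomial.eval 0 x))
    -- `π_{n-1} : B_{n-1} → A_{n-1}`, setting `ε = 0`
    (πn' : (kTE k ⧸ Ideal.span {tP k ^ n, eP k ^ 2}) →ₐ[k]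
        Polynomial k ⧸ Ideal.span {(X : Polynomial k) ^ n})
    (hπn' : ∀ x : kTE k,
      πn' (Ideal.Quotient.mk _ x) = Ideal.Quotient.mk _ (Polynomial.eval 0 x))
    -- the reduction `A_n → A_{n-1}` (reduction of `t` modulo `tⁿ`)
    (redA : (Polynomial k ⧸ Ideal.span {(X : Polynomial k) ^ (n + 1)}) →ₐ[k]
        Polynomial k ⧸ Ideal.span {(X : Polynomial k) ^ n})
    (hredA : ∀ y : Polynomial k, redA (Ideal.Quotient.mk _ y) = Ideal.Quotient.mk _ y)
    -- the reduction `B_n → B_{n-1}` (`tⁿ ↦ 0`)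
    (redB : (kTE k ⧸ Ideal.span {tP k ^ (n + 1), eP k ^ 2}) →ₐ[k]
        kTE k ⧸ Ideal.span {tP k ^ n, eP k ^ 2})
    (hredB : ∀ x : kTE k, redB (Ideal.Quotient.mk _ x) = Ideal.Quotient.mk _ x)
    -- the canonical surjection `B_n → C_n`
    (s : (kTE k ⧸ Ideal.span {tP k ^ (n + 1), eP k ^ 2}) →ₐ[k]
        kTE k ⧸ Ideal.span {tP k ^ (n + 1), eP k ^ 2, eP k * tP k ^ n})
    (hs : ∀ x : kTE k, s (Ideal.Quotient.mk _ x) = Ideal.Quotient.mk _ x)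
    -- surjectivity of the maps between the fibers over `ξ` and `ξ' = redA ∘ ξ`
    (hfib : ∀ ξ : R →ₐ[k] Polynomial k ⧸ Ideal.span {(X : Polynomial k) ^ (n + 1)},
      ∀ ψ : R →ₐ[k] kTE k ⧸ Ideal.span {tP k ^ n, eP k ^ 2},
        πn'.comp ψ = redA.comp ξ →
          ∃ φ : R →ₐ[k] kTE k ⧸ Ideal.span {tP k ^ (n + 1), eP k ^ 2},
            πn.comp φ = ξ ∧ redB.comp φ = ψ) :
    Function.Surjective
      (fun φ : R →ₐ[k] kTE k ⧸ Ideal.span {tP k ^ (n + 1), eP k ^ 2} => s.comp φ) := by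
  classical
  -- construct q1 : C_n → A_n
  obtain ⟨q1, hq1⟩ : ∃ q1 : (kTE k ⧸ Ideal.span {tP k ^ (n + 1), eP k ^ 2, eP k * tP k ^ n})
      →ₐ[k] (Polynomial k ⧸ Ideal.span {(X : Polynomial k) ^ (n + 1)}),
      ∀ x : kTE k, q1 (Ideal.Quotient.mk _ x)
        = Ideal.Quotient.mk _ (Polynomial.eval 0 x) := by
    have hker : ∀ a ∈ Ideal.span ({tP k ^ (n + 1), eP k ^ 2, eP k * tP k ^ n} : Set (kTE k)),
        ((Ideal.Quotient.mkₐ k (Ideal.span {(X : Polynomial k) ^ (n + 1)})).comp (ev0 k)) a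
          = 0 := by
      intro a ha
      have hle : Ideal.span ({tP k ^ (n + 1), eP k ^ 2, eP k * tP k ^ n} : Set (kTE k)) ≤
          RingHom.ker ((Ideal.Quotient.mkₐ k
            (Ideal.span {(X : Polynomial k) ^ (n + 1)})).comp (ev0 k)).toRingHom := by
        rw [Ideal.span_le]
        intro z hz
        simp only [Set.mem_insert_iff, Set.mem_singleton_iff] at hz
        rcases hz with rfl | rfl | rfl
        · show ((Ideal.Quotient.mkₐ k _).comp (ev0 k)) (tP k ^ (n + 1)) = 0
          rw [AlgHom.comp_apply, ev0_apply, Ideal.Quotient.mkₐ_eq_mk,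
            Ideal.Quotient.eq_zero_iff_mem]
          have : Polynomial.eval 0 (tP k ^ (n + 1)) = (X : Polynomial k) ^ (n + 1) := by
            simp [tP]
          rw [this]
          exact Ideal.subset_span rfl
        · show ((Ideal.Quotient.mkₐ k _).comp (ev0 k)) (eP k ^ 2) = 0
          rw [AlgHom.comp_apply, ev0_apply]
          simp [eP]
        · show ((Ideal.Quotient.mkₐ k _).comp (ev0 k)) (eP k * tP k ^ n) = 0
          rw [AlgHom.comp_apply, ev0_apply]
          simp [eP, tP]
      exact hle ha
    refine ⟨Ideal.Quotient.liftₐ _ _ hker, fun x => ?_⟩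
    rw [Ideal.Quotient.liftₐ_apply]
    rfl
  -- construct q2 : C_n → B_{n-1}
  obtain ⟨q2, hq2⟩ : ∃ q2 : (kTE k ⧸ Ideal.span {tP k ^ (n + 1), eP k ^ 2, eP k * tP k ^ n})
      →ₐ[k] (kTE k ⧸ Ideal.span {tP k ^ n, eP k ^ 2}),
      ∀ x : kTE k, q2 (Ideal.Quotient.mk _ x) = Ideal.Quotient.mk _ x := by
    have ht : tP k ^ n ∈ Ideal.span ({tP k ^ n, eP k ^ 2} : Set (kTE k)) :=
      Ideal.subset_span (by simp)
    have he : eP k ^ 2 ∈ Ideal.span ({tP k ^ n, eP k ^ 2} : Set (kTE k)) :=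
      Ideal.subset_span (by simp)
    have hker : ∀ a ∈ Ideal.span ({tP k ^ (n + 1), eP k ^ 2, eP k * tP k ^ n} : Set (kTE k)),
        (Ideal.Quotient.mkₐ k (Ideal.span ({tP k ^ n, eP k ^ 2} : Set (kTE k)))) a = 0 := by
      intro a ha
      have hle : Ideal.span ({tP k ^ (n + 1), eP k ^ 2, eP k * tP k ^ n} : Set (kTE k)) ≤
          RingHom.ker (Ideal.Quotient.mkₐ k
            (Ideal.span ({tP k ^ n, eP k ^ 2} : Set (kTE k)))).toRingHom := by
        rw [Ideal.span_le]
        intro z hz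
        simp only [Set.mem_insert_iff, Set.mem_singleton_iff] at hz
        rcases hz with rfl | rfl | rfl
        · have h' : tP k ^ (n + 1) = tP k * tP k ^ n := by ring
          show (Ideal.Quotient.mkₐ k _) (tP k ^ (n + 1)) = 0
          rw [Ideal.Quotient.mkₐ_eq_mk, Ideal.Quotient.eq_zero_iff_mem, h']
          exact Ideal.mul_mem_left _ _ ht
        · show (Ideal.Quotient.mkₐ k _) (eP k ^ 2) = 0
          rw [Ideal.Quotient.mkₐ_eq_mk, Ideal.Quotient.eq_zero_iff_mem]
          exact he
        · show (Ideal.Quotient.mkₐ k _) (eP k * tP k ^ n) = 0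
          rw [Ideal.Quotient.mkₐ_eq_mk, Ideal.Quotient.eq_zero_iff_mem]
          exact Ideal.mul_mem_left _ _ ht
      exact hle ha
    refine ⟨Ideal.Quotient.liftₐ _ _ hker, fun x => ?_⟩
    rw [Ideal.Quotient.liftₐ_apply]
    rfl
  -- main argument
  intro χ
  have hcomm : πn'.comp (q2.comp χ) = redA.comp (q1.comp χ) := by
    apply AlgHom.ext
    intro r
    obtain ⟨x, hx⟩ := Ideal.Quotient.mk_surjective (χ r)
    simp only [AlgHom.comp_apply, ← hx, hq1, hq2, hπn', hredA]
  obtain ⟨φ, hφ1, hφ2⟩ := hfib (q1.comp χ) (q2.comp χ) hcomm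
  refine ⟨φ, ?_⟩
  apply AlgHom.ext
  intro r
  show s (φ r) = χ r
  have hq1s : ∀ y, q1 (s y) = πn y := by
    intro y
    obtain ⟨x, hx⟩ := Ideal.Quotient.mk_surjective y
    rw [← hx, hs, hq1, hπn]
  have hq2s : ∀ y, q2 (s y) = redB y := by
    intro y
    obtain ⟨x, hx⟩ := Ideal.Quotient.mk_surjective y
    rw [← hx, hs, hq2, hredB]
  have e1 : q1 (s (φ r) - χ r) = 0 := by
    have h := AlgHom.congr_fun hφ1 r
    rw [AlgHom.comp_apply] at h
    rw [map_sub, hq1s, h, AlgHom.comp_apply, sub_self]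
  have e2 : q2 (s (φ r) - χ r) = 0 := by
    have h := AlgHom.congr_fun hφ2 r
    rw [AlgHom.comp_apply] at h
    rw [map_sub, hq2s, h, AlgHom.comp_apply, sub_self]
  obtain ⟨x, hx⟩ := Ideal.Quotient.mk_surjective (s (φ r) - χ r)
  have h1 : Polynomial.eval 0 x ∈ Ideal.span {(X : Polynomial k) ^ (n + 1)} := by
    rw [← Ideal.Quotient.eq_zero_iff_mem, ← hq1 x, hx]
    exact e1
  have h2 : x ∈ Ideal.span ({tP k ^ n, eP k ^ 2} : Set (kTE k)) := by
    rw [← Ideal.Quotient.eq_zero_iff_mem, ← hq2 x, hx]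
    exact e2
  have h3 := key_mem k n x h1 h2
  have h4 : s (φ r) - χ r = 0 := by
    rw [← hx, Ideal.Quotient.eq_zero_iff_mem]
    exact h3
  exact sub_eq_zero.mp h4
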